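/- Let L be a function from BCCSP processes to a set Λ of local observations for which there exist functions a^L : Λ → Λ (one for each a ∈ Act) and +^L : Λ × Λ → Λ such that L(a·p) = a^L(L(p)) and L(p + q) = L(p) +^L L(q) for all processes p, q. Then: (i) BGO_L(a·p) = {⟨a^L(L(p)), {(a, b) | b ∈ B}⟩ | B ⊆ BGO_L(p)}; and (ii) BGO_L(p + q) = {⟨L(p) +^L L(q), S1 ∪ S2⟩ | ⟨L(p), S1⟩ ∈ BGO_L(p) and ⟨L(q), S2⟩ ∈ BGO_L(q)}. -/

import Mathlib

/-- BCCSP processes over a set `Act` of actions. -/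
inductive Proc (Act : Type) : Type where
  | nil : Proc Act
  | pre : Act → Proc Act → Proc Act
  | choice : Proc Act → Proc Act → Proc Act

/-- The transition relation of BCCSP. -/
inductive Proc.Step {Act : Type} : Proc Act → Act → Proc Act → Prop where
  | pre (a : Act) (p : Proc Act) : Proc.Step (Proc.pre a p) a p
  | left {p p' : Proc Act} {a : Act} (q : Proc Act) :
      Proc.Step p a p' → Proc.Step (Proc.choice p q) a p'
  | right (p : Proc Act) {q q' : Proc Act} {a : Act} :
      Proc.Step q a q' → Proc.Step (Proc.choice p q) a q'

/-- The initial offer of a process. -/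
def Proc.initials {Act : Type} (p : Proc Act) : Set Act :=
  {a | ∃ p', Proc.Step p a p'}

/-- Branching general observations: finite trees with nodes labeled in `Λ`
and arcs labeled by actions in `Act`. -/
inductive Obs (Act Λ : Type) : Type where
  | node : Λ → List (Act × Obs Act Λ) → Obs Act Λ

/-- Membership `b ∈ BGO_L(p)`:
`BGO_L(p) = {⟨L(p), S⟩ | S ⊆ {(a, b) | p →a p', b ∈ BGO_L(p')}}`. -/
def InBGO {Act Λ : Type} (L : Proc Act → Λ) : Obs Act Λ → Proc Act → Prop
  | Obs.node l S, p =>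
      l = L p ∧ ∀ a b, (a, b) ∈ S → ∃ p', Proc.Step p a p' ∧ InBGO L b p'
termination_by b _ => sizeOf b
decreasing_by
  have h1 : sizeOf (a, b) < sizeOf S := List.sizeOf_lt_of_mem (by assumption)
  simp at h1 ⊢
  omega


lemma InBGO_node {Act Λ : Type} (L : Proc Act → Λ) (l : Λ) (S : List (Act × Obs Act Λ))
    (p : Proc Act) :
    InBGO L (Obs.node l S) p ↔
      l = L p ∧ ∀ a b, (a, b) ∈ S → ∃ p', Proc.Step p a p' ∧ InBGO L b p' := by
  rw [InBGO]

lemma all_fst_eq {Act Λ : Type} (a : Act) :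
    ∀ S : List (Act × Obs Act Λ), (∀ x ∈ S, x.1 = a) →
      S = (S.map Prod.snd).map (fun c => (a, c))
  | [], _ => rfl
  | (x :: S), h => by
      have hx := h x List.mem_cons_self
      cases x with
      | mk a' c =>
        simp only [List.map_cons]
        simp only at hx
        rw [hx, ← all_fst_eq a S (fun y hy => h y (List.mem_cons_of_mem _ hy))]

lemma split_list {Act Λ : Type} (L : Proc Act → Λ) (p q : Proc Act) :
    ∀ S : List (Act × Obs Act Λ),
      (∀ a b, (a, b) ∈ S →
        (∃ r, Proc.Step p a r ∧ InBGO L b r) ∨ (∃ r, Proc.Step q a r ∧ InBGO L b r)) →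
      ∃ S₁ S₂ : List (Act × Obs Act Λ),
        (∀ x, x ∈ S ↔ x ∈ S₁ ∨ x ∈ S₂) ∧
        (∀ a b, (a, b) ∈ S₁ → ∃ r, Proc.Step p a r ∧ InBGO L b r) ∧
        (∀ a b, (a, b) ∈ S₂ → ∃ r, Proc.Step q a r ∧ InBGO L b r)
  | [], _ => ⟨[], [], by simp, by simp, by simp⟩
  | (x :: S), h => by
      obtain ⟨S₁, S₂, hmem, h1, h2⟩ := split_list L p q S
        (fun a b hab => h a b (List.mem_cons_of_mem _ hab))
      rcases h x.1 x.2 (by simp) with hp | hq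
      · refine ⟨x :: S₁, S₂, ?_, ?_, h2⟩
        · intro y; simp [hmem y]; tauto
        · intro a b hab
          rcases List.mem_cons.mp hab with he | hm
          · cases he; exact hp
          · exact h1 a b hm
      · refine ⟨S₁, x :: S₂, ?_, h1, ?_⟩
        · intro y; simp [hmem y]; tauto
        · intro a b hab
          rcases List.mem_cons.mp hab with he | hm
          · cases he; exact hq
          · exact h2 a b hm

/-- compositional characterization of branching general
observations for a compositional local observation function `L`. -/
theorem stmt1 {Act Λ : Type} (L : Proc Act → Λ)
    (actL : Act → Λ → Λ) (addL : Λ → Λ → Λ)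
    (hpre : ∀ (a : Act) (p : Proc Act), L (Proc.pre a p) = actL a (L p))
    (hadd : ∀ p q : Proc Act, L (Proc.choice p q) = addL (L p) (L q)) :
    (∀ (a : Act) (p : Proc Act),
      {b | InBGO L b (Proc.pre a p)} =
        {b | ∃ B : List (Obs Act Λ), (∀ c ∈ B, InBGO L c p) ∧
              b = Obs.node (actL a (L p)) (B.map (fun c => (a, c)))}) ∧
    (∀ p q : Proc Act,
      {b | InBGO L b (Proc.choice p q)} =
        {b | ∃ (S S₁ S₂ : List (Act × Obs Act Λ)),
              InBGO L (Obs.node (L p) S₁) p ∧ InBGO L (Obs.node (L q) S₂) q ∧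
              (∀ x, x ∈ S ↔ x ∈ S₁ ∨ x ∈ S₂) ∧
              b = Obs.node (addL (L p) (L q)) S}) := by
  constructor
  · intro a p
    ext b
    simp only [Set.mem_setOf_eq]
    constructor
    · intro hb
      cases b with
      | node l S =>
        rw [InBGO_node] at hb
        obtain ⟨hl, hS⟩ := hb
        have hfst : ∀ x ∈ S, x.1 = a := by
          intro x hx
          obtain ⟨p', hstep, _⟩ := hS x.1 x.2 (by simpa using hx)
          cases hstep; rfl
        refine ⟨S.map Prod.snd, ?_, ?_⟩
        · intro c hc
          obtain ⟨x, hx, hxc⟩ := List.mem_map.mp hc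
          obtain ⟨p', hstep, hin⟩ := hS x.1 x.2 (by simpa using hx)
          cases hstep
          rw [← hxc]; exact hin
        · rw [hl, hpre, ← all_fst_eq a S hfst]
    · rintro ⟨B, hB, rfl⟩
      rw [InBGO_node]
      refine ⟨(hpre a p).symm, ?_⟩
      intro a' b hab
      obtain ⟨c, hc, hc2⟩ := List.mem_map.mp hab
      obtain ⟨rfl, rfl⟩ : a' = a ∧ b = c := by
        have := hc2.symm
        simp only [Prod.mk.injEq] at this
        exact ⟨this.1, this.2⟩
      exact ⟨p, Proc.Step.pre a' p, hB _ hc⟩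
  · intro p q
    ext b
    simp only [Set.mem_setOf_eq]
    constructor
    · intro hb
      cases b with
      | node l S =>
        rw [InBGO_node] at hb
        obtain ⟨hl, hS⟩ := hb
        have h' : ∀ a b, (a, b) ∈ S →
            (∃ r, Proc.Step p a r ∧ InBGO L b r) ∨ (∃ r, Proc.Step q a r ∧ InBGO L b r) := by
          intro a c hac
          obtain ⟨r, hstep, hin⟩ := hS a c hac
          cases hstep with
          | left _ h => exact Or.inl ⟨_, h, hin⟩
          | right _ h => exact Or.inr ⟨_, h, hin⟩
        obtain ⟨S₁, S₂, hmem, h1, h2⟩ := split_list L p q S h'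
        exact ⟨S, S₁, S₂, (InBGO_node ..).mpr ⟨rfl, h1⟩, (InBGO_node ..).mpr ⟨rfl, h2⟩,
          hmem, by rw [hl, hadd]⟩
    · rintro ⟨S, S₁, S₂, h1, h2, hmem, rfl⟩
      rw [InBGO_node] at h1 h2 ⊢
      refine ⟨(hadd p q).symm, ?_⟩
      intro a c hac
      rcases (hmem (a, c)).mp hac with h | h
      · obtain ⟨r, hstep, hin⟩ := h1.2 a c h
        exact ⟨r, Proc.Step.left q hstep, hin⟩
      · obtain ⟨r, hstep, hin⟩ := h2.2 a c h
        exact ⟨r, Proc.Step.right p hstep, hin⟩
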